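/- Let q, β > 0, 0 < α < 1, n ∈ ℕ with n^{1-α} > 2, and let f : ℝ → ℝ be bounded and continuous. Then for every x ∈ ℝ, |B_n(f)(x) - f(x)| ≤ ω(f, n^{-α}) + 2(q + 1/q)‖f‖_∞ · e^{-β(n^{1-α} - 1)}, where ω is the modulus of continuity. -/

import Mathlib

open MeasureTheory Filter Real

noncomputable def nu (q β x : ℝ) : ℝ :=
  (1 - q * Real.exp (-β * x)) / (1 + q * Real.exp (-β * x))

noncomputable def G (q β x : ℝ) : ℝ := (1/4) * (nu q β (x+1) - nu q β (x-1))

noncomputable def Psi (q β x : ℝ) : ℝ := (G q β x + G (1/q) β x) / 2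

noncomputable def omega (f : ℝ → ℝ) (θ : ℝ) : ℝ :=
  sSup {d : ℝ | ∃ x y : ℝ, |x - y| ≤ θ ∧ d = |f x - f y|}

noncomputable def supNorm (f : ℝ → ℝ) : ℝ := ⨆ x : ℝ, |f x|

noncomputable def B (q β : ℝ) (n : ℕ) (f : ℝ → ℝ) (x : ℝ) : ℝ :=
  ∫ v : ℝ, f (v / n) * Psi q β ((n : ℝ) * x - v)

open Set Topology

section basic
variable {q β : ℝ} (hq : 0 < q) (hβ : 0 < β)

include hq in
lemma den_pos' (t : ℝ) : 0 < 1 + q * Real.exp (-β * t) := by positivity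

include hq in
lemma nu_eq (t : ℝ) : nu q β t = 1 - 2 * q / (Real.exp (β * t) + q) := by
  have h1 : Real.exp (-β * t) = (Real.exp (β * t))⁻¹ := by
    rw [← Real.exp_neg]; ring_nf
  have h2 : (0:ℝ) < Real.exp (β * t) := Real.exp_pos _
  have h3 := den_pos' hq (β := β) t
  rw [nu, h1]
  field_simp
  ring

include hq in
lemma nu_mono {s t : ℝ} (hβ2 : 0 < β) (hst : s ≤ t) : nu q β s ≤ nu q β t := by
  rw [nu_eq hq, nu_eq hq]
  have h1 : (0:ℝ) < Real.exp (β * s) + q := by positivity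
  have h2 : Real.exp (β * s) + q ≤ Real.exp (β * t) + q := by
    have := Real.exp_le_exp.2 (mul_le_mul_of_nonneg_left hst hβ2.le)
    linarith
  have := div_le_div_of_nonneg_left (by positivity : (0:ℝ) ≤ 2*q) h1 h2
  linarith

include hq in
lemma nu_le_one (t : ℝ) : nu q β t ≤ 1 := by
  have h3 := den_pos' hq (β := β) t
  rw [nu, div_le_one h3]
  nlinarith [Real.exp_pos (-β * t)]

include hq in
lemma neg_one_le_nu (t : ℝ) : -1 ≤ nu q β t := by
  have h3 := den_pos' hq (β := β) t
  rw [nu, le_div_iff₀ h3]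
  nlinarith [Real.exp_pos (-β * t)]

include hq in
lemma one_sub_nu_le (t : ℝ) : 1 - nu q β t ≤ 2 * q * Real.exp (-β * t) := by
  have h3 := den_pos' hq (β := β) t
  have he := Real.exp_pos (-β * t)
  rw [nu]
  have : 1 - (1 - q * Real.exp (-β * t)) / (1 + q * Real.exp (-β * t))
      = 2 * q * Real.exp (-β * t) / (1 + q * Real.exp (-β * t)) := by
    field_simp
    ring
  rw [this, div_le_iff₀ h3]
  nlinarith [sq_nonneg (q * Real.exp (-β * t))]

include hq hβ in
lemma G_nonneg (t : ℝ) : 0 ≤ G q β t := by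
  have := nu_mono hq (β := β) hβ (show t - 1 ≤ t + 1 by linarith)
  rw [G]; linarith

include hq in
lemma continuous_nu : Continuous (nu q β) := by
  apply Continuous.div
  · continuity
  · continuity
  · intro t; exact (den_pos' hq t).ne'

include hq in
lemma continuous_G : Continuous (G q β) := by
  apply Continuous.mul continuous_const
  exact ((continuous_nu hq).comp (by continuity)).sub ((continuous_nu hq).comp (by continuity))

include hq in
lemma continuous_Psi : Continuous (Psi q β) := by
  have h1q : 0 < 1/q := by positivity
  exact ((continuous_G hq).add (continuous_G h1q)).div_const 2

include hq hβ in
lemma Psi_nonneg (t : ℝ) : 0 ≤ Psi q β t := by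
  have h1q : 0 < 1/q := by positivity
  have := G_nonneg hq hβ t
  have := G_nonneg h1q hβ t
  rw [Psi]; linarith

end basic

noncomputable def Fad (q β t : ℝ) : ℝ := t + (2/β) * Real.log (1 + q * Real.exp (-β * t))

noncomputable def Aad (q β t : ℝ) : ℝ := (Fad q β (t+1) - Fad q β (t-1)) / 4

section deriv
variable {q β : ℝ} (hq : 0 < q) (hβ : 0 < β)

include hq hβ in
lemma hasDerivAt_Fad (t : ℝ) : HasDerivAt (Fad q β) (nu q β t) t := by
  have h3 := den_pos' hq (β := β) t
  have h1 : HasDerivAt (fun s : ℝ => 1 + q * Real.exp (-β * s))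
      (q * (Real.exp (-β * t) * (-β))) t := by
    have hlin : HasDerivAt (fun y : ℝ => -β * y) (-β) t := by
      simpa using (hasDerivAt_id t).const_mul (-β)
    have : HasDerivAt (fun s : ℝ => Real.exp (-β * s)) (Real.exp (-β * t) * (-β)) t := hlin.exp
    simpa using (this.const_mul q).const_add 1
  have h2 : HasDerivAt (fun s : ℝ => s + (2/β) * Real.log (1 + q * Real.exp (-β * s)))
      (1 + (2/β) * ((q * (Real.exp (-β * t) * (-β))) / (1 + q * Real.exp (-β * t)))) t := by
    exact (hasDerivAt_id t).add (((h1.log h3.ne').const_mul (2/β)))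
  have : (1 + (2/β) * ((q * (Real.exp (-β * t) * (-β))) / (1 + q * Real.exp (-β * t))))
      = nu q β t := by
    rw [nu]
    field_simp
    ring
  rw [← this]
  exact h2

include hq hβ in
lemma hasDerivAt_Aad (t : ℝ) : HasDerivAt (Aad q β) (G q β t) t := by
  have h1 : HasDerivAt (fun s : ℝ => Fad q β (s+1)) (nu q β (t+1)) t := by
    have := (hasDerivAt_Fad hq hβ (t+1)).comp t ((hasDerivAt_id t).add_const 1)
    simpa [Function.comp_def] using this
  have h2 : HasDerivAt (fun s : ℝ => Fad q β (s-1)) (nu q β (t-1)) t := by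
    have := (hasDerivAt_Fad hq hβ (t-1)).comp t ((hasDerivAt_id t).sub_const 1)
    simpa [Function.comp_def] using this
  have := (h1.sub h2).div_const 4
  refine HasDerivAt.congr_deriv this ?_
  rw [G]; ring

include hq hβ in
lemma tendsto_Aad : Tendsto (Aad q β) atTop (𝓝 (1/2)) := by
  have key : ∀ c : ℝ, Tendsto (fun t : ℝ => Real.log (1 + q * Real.exp (-β * (t+c)))) atTop (𝓝 0) := by
    intro c
    have h1 : Tendsto (fun t : ℝ => -β * (t+c)) atTop atBot := by
      apply Tendsto.const_mul_atTop_of_neg (neg_neg_iff_pos.2 hβ)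
      exact tendsto_atTop_add_const_right atTop c tendsto_id
    have h2 : Tendsto (fun t : ℝ => 1 + q * Real.exp (-β * (t+c))) atTop (𝓝 1) := by
      have := (Real.tendsto_exp_atBot.comp h1).const_mul q
      have h3 := this.const_add 1
      simpa using h3
    have h4 : ContinuousAt Real.log 1 := Real.continuousAt_log (by norm_num)
    have := h4.tendsto.comp h2
    simpa [Function.comp_def] using this
  have heq : ∀ t : ℝ, Aad q β t = (2 + (2/β) * (Real.log (1 + q * Real.exp (-β * (t+1)))
      - Real.log (1 + q * Real.exp (-β * (t+(-1)))))) / 4 := by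
    intro t
    rw [Aad, Fad, Fad]
    have : t - 1 = t + (-1) := by ring
    rw [this]
    ring
  rw [show (1/2 : ℝ) = (2 + (2/β) * ((0:ℝ) - 0)) / 4 by norm_num]
  exact (((((key 1).sub (key (-1))).const_mul (2/β)).const_add 2).div_const 4).congr
    fun t => (heq t).symm

end deriv

section integrals
variable {q β : ℝ} (hq : 0 < q) (hβ : 0 < β)

include hq hβ in
lemma integral_G_Ioi (a : ℝ) : ∫ t in Ioi a, G q β t = 1/2 - Aad q β a :=
  integral_Ioi_of_hasDerivAt_of_nonneg
    (hasDerivAt_Aad hq hβ a).continuousAt.continuousWithinAt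
    (fun t _ => hasDerivAt_Aad hq hβ t)
    (fun t _ => G_nonneg hq hβ t) (tendsto_Aad hq hβ)

include hq hβ in
lemma integrableOn_G_Ioi (a : ℝ) : IntegrableOn (G q β) (Ioi a) :=
  integrableOn_Ioi_deriv_of_nonneg
    (hasDerivAt_Aad hq hβ a).continuousAt.continuousWithinAt
    (fun t _ => hasDerivAt_Aad hq hβ t)
    (fun t _ => G_nonneg hq hβ t) (tendsto_Aad hq hβ)

include hq in
lemma nu_neg (t : ℝ) : nu q β (-t) = -(nu (1/q) β t) := by
  have he : (0:ℝ) < Real.exp (-β * t) := Real.exp_pos _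
  have he' : (0:ℝ) < Real.exp (-β * -t) := Real.exp_pos _
  have hprod : Real.exp (-β * -t) * Real.exp (-β * t) = 1 := by
    rw [← Real.exp_add]; ring_nf; exact Real.exp_zero
  have h1 : (0:ℝ) < 1 + q * Real.exp (-β * -t) := by positivity
  have h2 : (0:ℝ) < 1 + (1/q) * Real.exp (-β * t) := by positivity
  have hp : Real.exp (β*t) * Real.exp (-(β*t)) = 1 := by
    rw [← Real.exp_add]; simp
  rw [nu, nu, ← neg_div, div_eq_div_iff h1.ne' h2.ne']
  field_simp
  nlinarith [hp]

end integrals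

section more
variable {q β : ℝ} (hq : 0 < q) (hβ : 0 < β)

include hq in
lemma G_neg (t : ℝ) : G q β (-t) = G (1/q) β t := by
  rw [G, G, show -t + 1 = -(t-1) by ring, show -t - 1 = -(t+1) by ring,
    nu_neg hq, nu_neg hq]
  ring

include hq in
lemma Psi_neg (t : ℝ) : Psi q β (-t) = Psi q β t := by
  have h1q : 0 < 1/q := by positivity
  rw [Psi, Psi, G_neg hq, G_neg h1q, one_div_one_div]
  ring

include hq hβ in
lemma integrableOn_Psi_Ioi (a : ℝ) : IntegrableOn (Psi q β) (Ioi a) := by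
  have h1q : 0 < 1/q := by positivity
  have := ((integrableOn_G_Ioi hq hβ a).add (integrableOn_G_Ioi h1q hβ a)).div_const 2
  exact this.congr (Filter.Eventually.of_forall fun t => by simp [Psi])

include hq hβ in
lemma integrableOn_Psi_Iic (a : ℝ) : IntegrableOn (Psi q β) (Iic a) := by
  have m : MeasurableEmbedding (fun x : ℝ => -x) := (Homeomorph.neg ℝ).measurableEmbedding
  rw [IntegrableOn, ← Measure.map_neg_eq_self (volume : Measure ℝ), ← IntegrableOn,
    m.integrableOn_map_iff]
  simp_rw [Function.comp_def]
  have : IntegrableOn (Psi q β) (Ioi (-a)) := integrableOn_Psi_Ioi hq hβ (-a)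
  have h2 : IntegrableOn (fun x => Psi q β (-x)) (Ioi (-a)) :=
    this.congr (Filter.Eventually.of_forall fun t => (Psi_neg hq t).symm)
  have hpre : (fun x : ℝ => -x) ⁻¹' Iic a = Ici (-a) := by
    ext y; simp [neg_le]
  rw [hpre]
  exact Iff.mpr integrableOn_Ici_iff_integrableOn_Ioi h2

end more

section total
variable {q β : ℝ} (hq : 0 < q) (hβ : 0 < β)

include hq hβ in
lemma integrable_Psi : Integrable (Psi q β) := by
  rw [← integrableOn_univ, ← Set.Iic_union_Ioi (a := (0:ℝ))]
  exact (integrableOn_Psi_Iic hq hβ 0).union (integrableOn_Psi_Ioi hq hβ 0)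

lemma log_aux {c : ℝ} (hc : 0 < c) (s : ℝ) :
    Real.log (1 + c * Real.exp s) = Real.log c + s + Real.log (1 + (1/c) * Real.exp (-s)) := by
  have hprod : Real.exp s * Real.exp (-s) = 1 := by rw [← Real.exp_add]; simp
  have h : 1 + c * Real.exp s = c * Real.exp s * (1 + (1/c) * Real.exp (-s)) := by
    field_simp
    nlinarith [hprod]
  rw [h, Real.log_mul (by positivity) (by positivity),
    Real.log_mul hc.ne' (Real.exp_ne_zero s), Real.log_exp]

include hq hβ in
lemma Aad_add : Aad q β 0 + Aad (1/q) β 0 = 0 := by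
  have h1q : 0 < 1/q := by positivity
  have e1 : -β * ((0:ℝ)+1) = -β := by ring
  have e2 : -β * ((0:ℝ)-1) = β := by ring
  have h1 : Real.log (1 + q * Real.exp β) = Real.log q + β + Real.log (1 + (1/q) * Real.exp (-β)) :=
    log_aux hq β
  have h2 : Real.log (1 + (1/q) * Real.exp β)
      = -Real.log q + β + Real.log (1 + q * Real.exp (-β)) := by
    have := log_aux h1q β
    rwa [one_div_one_div, Real.log_div one_ne_zero hq.ne', Real.log_one, zero_sub] at this
  rw [Aad, Aad, Fad, Fad, Fad, Fad, e1, e2, h1, h2]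
  field_simp
  ring

include hq hβ in
lemma integral_Psi_Ioi (a : ℝ) :
    ∫ t in Ioi a, Psi q β t = 1/2 - (Aad q β a + Aad (1/q) β a) / 2 := by
  have h1q : 0 < 1/q := by positivity
  have : ∫ t in Ioi a, Psi q β t
      = ((∫ t in Ioi a, G q β t) + ∫ t in Ioi a, G (1/q) β t) / 2 := by
    rw [← integral_add (integrableOn_G_Ioi hq hβ a) (integrableOn_G_Ioi h1q hβ a),
      ← integral_div]
    rfl
  rw [this, integral_G_Ioi hq hβ, integral_G_Ioi h1q hβ]
  ring

include hq hβ in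
lemma integral_Psi_Iic (T : ℝ) :
    ∫ t in Iic (-T), Psi q β t = ∫ t in Ioi T, Psi q β t := by
  have h1 : ∫ t in Iic (-T), Psi q β t = ∫ t in Iic (-T), Psi q β (-t) :=
    setIntegral_congr_fun measurableSet_Iic (fun t _ => (Psi_neg hq t).symm)
  rw [h1, integral_comp_neg_Iic, neg_neg]

include hq hβ in
lemma integral_Psi_total : ∫ t, Psi q β t = 1 := by
  rw [← intervalIntegral.integral_Iic_add_Ioi (integrableOn_Psi_Iic hq hβ 0) (integrableOn_Psi_Ioi hq hβ 0)]
  rw [show (0:ℝ) = -0 by norm_num] 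
  rw [integral_Psi_Iic hq hβ 0, neg_zero, integral_Psi_Ioi hq hβ 0, Aad_add hq hβ]
  norm_num

end total

section tail
variable {q β : ℝ} (hq : 0 < q) (hβ : 0 < β)

include hq hβ in
lemma tail_G (T : ℝ) : ∫ t in Ioi T, G q β t ≤ q * Real.exp (-β * (T-1)) := by
  rw [integral_G_Ioi hq hβ]
  have hFTC : Fad q β (T+1) - Fad q β (T-1) = ∫ s in (T-1)..(T+1), nu q β s := by
    refine (intervalIntegral.integral_eq_sub_of_hasDerivAt
      (fun s _ => hasDerivAt_Fad hq hβ s) ?_).symm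
    exact (continuous_nu hq).intervalIntegrable _ _
  have h2 : (1:ℝ)/2 - Aad q β T = (∫ s in (T-1)..(T+1), (1 - nu q β s)) / 4 := by
    have hone : ∫ s in (T-1)..(T+1), (1:ℝ) = 2 := by simp; ring
    rw [intervalIntegral.integral_sub (intervalIntegrable_const)
      ((continuous_nu hq).intervalIntegrable _ _), hone, ← hFTC, Aad]
    ring
  rw [h2]
  have hmono : ∫ s in (T-1)..(T+1), (1 - nu q β s)
      ≤ ∫ s in (T-1)..(T+1), 2 * q * Real.exp (-β * (T-1)) := by
    apply intervalIntegral.integral_mono_on (by linarith)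
    · exact (intervalIntegrable_const.sub ((continuous_nu hq).intervalIntegrable _ _))
    · exact intervalIntegrable_const
    · intro s hs
      have h1 := one_sub_nu_le hq (β := β) s
      have h3 : Real.exp (-β * s) ≤ Real.exp (-β * (T-1)) := by
        apply Real.exp_le_exp.2
        nlinarith [hs.1]
      nlinarith
  have hconst : ∫ s in (T-1)..(T+1), 2 * q * Real.exp (-β * (T-1))
      = 2 * (2 * q * Real.exp (-β * (T-1))) := by simp; ring
  rw [hconst] at hmono
  linarith

include hq hβ in
lemma tail_Psi_Ioi (T : ℝ) :
    ∫ t in Ioi T, Psi q β t ≤ (q + 1/q) / 2 * Real.exp (-β * (T-1)) := by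
  have h1q : 0 < 1/q := by positivity
  have : ∫ t in Ioi T, Psi q β t
      = ((∫ t in Ioi T, G q β t) + ∫ t in Ioi T, G (1/q) β t) / 2 := by
    rw [← integral_add (integrableOn_G_Ioi hq hβ T) (integrableOn_G_Ioi h1q hβ T),
      ← integral_div]
    rfl
  rw [this]
  have t1 := tail_G hq hβ T
  have t2 := tail_G h1q hβ T
  linarith

include hq hβ in
lemma tail_Psi_Iic (T : ℝ) :
    ∫ t in Iic (-T), Psi q β t ≤ (q + 1/q) / 2 * Real.exp (-β * (T-1)) := by
  rw [integral_Psi_Iic hq hβ]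
  exact tail_Psi_Ioi hq hβ T

end tail

section fstuff
variable {f : ℝ → ℝ} {M : ℝ} (hM : ∀ y, |f y| ≤ M)

include hM in
lemma le_supNorm (y : ℝ) : |f y| ≤ supNorm f :=
  le_ciSup ⟨M, by rintro _ ⟨z, rfl⟩; exact hM z⟩ y

include hM in
lemma supNorm_nonneg : 0 ≤ supNorm f := le_trans (abs_nonneg _) (le_supNorm hM 0)

include hM in
lemma bddAbove_omega (θ : ℝ) :
    BddAbove {d : ℝ | ∃ x y : ℝ, |x - y| ≤ θ ∧ d = |f x - f y|} := by
  refine ⟨2 * M, ?_⟩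
  rintro d ⟨a, b, _, rfl⟩
  have := hM a; have := hM b
  have := abs_sub (f a) (f b)
  calc |f a - f b| ≤ |f a| + |f b| := abs_sub _ _
    _ ≤ 2 * M := by linarith

include hM in
lemma le_omega {θ a b : ℝ} (hab : |a - b| ≤ θ) : |f a - f b| ≤ omega f θ :=
  le_csSup (bddAbove_omega hM θ) ⟨a, b, hab, rfl⟩

include hM in
lemma omega_nonneg {θ : ℝ} (hθ : 0 ≤ θ) : 0 ≤ omega f θ := by
  have h := le_omega hM (a := 0) (b := 0) (by simpa using hθ)
  simpa using h

end fstuff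

theorem B_quantitative (q β α : ℝ) (hq : 0 < q) (hβ : 0 < β)
    (hα0 : 0 < α) (hα1 : α < 1) (n : ℕ) (hn : 2 < (n : ℝ) ^ (1 - α))
    (f : ℝ → ℝ) (hf : Continuous f) (hfb : ∃ M : ℝ, ∀ x : ℝ, |f x| ≤ M) (x : ℝ) :
    |B q β n f x - f x| ≤
      omega f ((n : ℝ) ^ (-α)) +
        2 * (q + 1/q) * supNorm f * Real.exp (-β * ((n : ℝ) ^ (1 - α) - 1)) := by
  obtain ⟨M, hM⟩ := hfb
  have hn0 : (0:ℝ) < n := by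
    rcases Nat.eq_zero_or_pos n with h | h
    · exfalso; rw [h] at hn; simp at hn
      rw [Real.zero_rpow (by linarith : 1 - α ≠ 0)] at hn; linarith
    · exact_mod_cast h
  have hnne : (n:ℝ) ≠ 0 := hn0.ne'
  set T : ℝ := (n : ℝ) ^ (1 - α) with hT
  set θ : ℝ := (n : ℝ) ^ (-α) with hθ
  have hθpos : 0 < θ := Real.rpow_pos_of_pos hn0 _
  have hTθ : T = n * θ := by
    rw [hT, hθ, show (1 - α) = 1 + (-α) by ring, Real.rpow_add hn0, Real.rpow_one]
  have hT2 : 2 < T := hn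
  -- Step 1: rewrite B as integral against Psi
  have hB : B q β n f x = ∫ t : ℝ, f (x - t / n) * Psi q β t := by
    rw [B, ← integral_sub_left_eq_self (fun t => f (x - t / (n:ℝ)) * Psi q β t) volume ((n:ℝ) * x)]
    congr 1
    ext v
    rw [show x - ((n:ℝ) * x - v) / n = v / n by field_simp; ring]
  -- integrability
  have hPsi_int : Integrable (Psi q β) := integrable_Psi hq hβ
  have hcont1 : Continuous fun t : ℝ => f (x - t / n) := by
    apply hf.comp; continuity
  have hg : Integrable (fun t : ℝ => f (x - t / n) * Psi q β t) :=
    hPsi_int.bdd_mul (c := M) hcont1.aestronglyMeasurable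
      (Filter.Eventually.of_forall fun t => by simpa using hM (x - t / n))
  have habs : Integrable (fun t : ℝ => |f (x - t / n) - f x| * Psi q β t) :=
    hPsi_int.bdd_mul (c := 2 * M) ((hcont1.sub continuous_const).abs.aestronglyMeasurable)
      (Filter.Eventually.of_forall fun t => by
        rw [Real.norm_eq_abs, abs_abs]
        have := hM (x - t / n); have := hM x
        calc |f (x - t / n) - f x| ≤ |f (x - t / n)| + |f x| := abs_sub _ _
          _ ≤ 2 * M := by linarith)
  -- Step 3
  have hfx : f x = ∫ t : ℝ, f x * Psi q β t := by
    rw [integral_const_mul, integral_Psi_total hq hβ, mul_one]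
  have hsub : B q β n f x - f x = ∫ t : ℝ, (f (x - t / n) - f x) * Psi q β t := by
    have heq : ∫ t : ℝ, (f (x - t / n) - f x) * Psi q β t
        = (∫ t : ℝ, f (x - t / n) * Psi q β t) - ∫ t : ℝ, f x * Psi q β t := by
      rw [← integral_sub hg (hPsi_int.const_mul (f x))]
      congr 1; ext t; ring
    rw [hB, heq, ← hfx]
  -- Step 4
  have hstep4 : |B q β n f x - f x| ≤ ∫ t : ℝ, |f (x - t / n) - f x| * Psi q β t := by
    rw [hsub]
    calc |∫ t : ℝ, (f (x - t / n) - f x) * Psi q β t|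
        ≤ ∫ t : ℝ, |(f (x - t / n) - f x) * Psi q β t| := by
          have := norm_integral_le_integral_norm (μ := volume)
            (fun t : ℝ => (f (x - t / n) - f x) * Psi q β t)
          simpa [Real.norm_eq_abs, abs_mul] using this
      _ = ∫ t : ℝ, |f (x - t / n) - f x| * Psi q β t := by
          congr 1; ext t
          rw [abs_mul, abs_of_nonneg (Psi_nonneg hq hβ t)]

  -- Step 5: split the integral
  set g : ℝ → ℝ := fun t => |f (x - t / n) - f x| * Psi q β t with hgdef
  have hsplit : ∫ t : ℝ, g t
      = (∫ t in Iic (-T), g t) + ((∫ t in Ioc (-T) T, g t) + ∫ t in Ioi T, g t) := by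
    rw [← setIntegral_union (Ioc_disjoint_Ioi_same) measurableSet_Ioi
      (habs.integrableOn) (habs.integrableOn), Ioc_union_Ioi_eq_Ioi (by linarith : -T ≤ T),
      intervalIntegral.integral_Iic_add_Ioi (habs.integrableOn) (habs.integrableOn)]
  -- bounds
  have hsup : ∀ y, |f y| ≤ supNorm f := le_supNorm hM
  have hsup0 : 0 ≤ supNorm f := supNorm_nonneg hM
  have hgb : ∀ t : ℝ, g t ≤ (2 * supNorm f) * Psi q β t := by
    intro t
    have h1 : |f (x - t / n) - f x| ≤ 2 * supNorm f := by
      have := hsup (x - t / n); have := hsup x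
      calc |f (x - t / n) - f x| ≤ |f (x - t / n)| + |f x| := abs_sub _ _
        _ ≤ 2 * supNorm f := by linarith
    exact mul_le_mul_of_nonneg_right h1 (Psi_nonneg hq hβ t) |>.trans_eq rfl
  have htail : ∀ s : Set ℝ, MeasurableSet s →
      (∫ t in s, g t) ≤ 2 * supNorm f * ∫ t in s, Psi q β t := by
    intro s hs
    rw [← integral_const_mul]
    exact setIntegral_mono_on habs.integrableOn
      ((hPsi_int.const_mul _).integrableOn) hs (fun t _ => hgb t)
  have hexp : (0:ℝ) ≤ (q + 1/q) / 2 * Real.exp (-β * (T - 1)) := by positivity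
  have hIic : (∫ t in Iic (-T), g t)
      ≤ 2 * supNorm f * ((q + 1/q) / 2 * Real.exp (-β * (T - 1))) := by
    refine (htail _ measurableSet_Iic).trans ?_
    exact mul_le_mul_of_nonneg_left (tail_Psi_Iic hq hβ T) (by positivity)
  have hIoi : (∫ t in Ioi T, g t)
      ≤ 2 * supNorm f * ((q + 1/q) / 2 * Real.exp (-β * (T - 1))) := by
    refine (htail _ measurableSet_Ioi).trans ?_
    exact mul_le_mul_of_nonneg_left (tail_Psi_Ioi hq hβ T) (by positivity)
  have homega0 : 0 ≤ omega f θ := omega_nonneg hM hθpos.le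
  have hmid : (∫ t in Ioc (-T) T, g t) ≤ omega f θ := by
    have hptwise : ∀ t ∈ Ioc (-T) T, g t ≤ omega f θ * Psi q β t := by
      intro t ht
      have habs_t : |t| ≤ T := abs_le.2 ⟨ht.1.le, ht.2⟩
      have hdist : |(x - t / n) - x| ≤ θ := by
        rw [show (x - t / n) - x = -(t / n) by ring, abs_neg, abs_div,
          abs_of_pos hn0, div_le_iff₀ hn0]
        rw [hTθ] at habs_t
        linarith [habs_t]
      exact mul_le_mul_of_nonneg_right (le_omega hM hdist) (Psi_nonneg hq hβ t)
    calc (∫ t in Ioc (-T) T, g t) ≤ ∫ t in Ioc (-T) T, omega f θ * Psi q β t :=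
          setIntegral_mono_on habs.integrableOn
            ((hPsi_int.const_mul _).integrableOn) measurableSet_Ioc hptwise
      _ = omega f θ * ∫ t in Ioc (-T) T, Psi q β t := integral_const_mul _ _
      _ ≤ omega f θ * 1 := by
          refine mul_le_mul_of_nonneg_left ?_ homega0
          rw [← integral_Psi_total hq hβ]
          exact setIntegral_le_integral hPsi_int
            (Filter.Eventually.of_forall fun t => Psi_nonneg hq hβ t)
      _ = omega f θ := mul_one _
  have := hstep4.trans (le_of_eq hsplit)
  have hfinal : |B q β n f x - f x|
      ≤ omega f θ + 2 * (q + 1/q) * supNorm f * Real.exp (-β * (T - 1)) := by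
    have h2 : 2 * supNorm f * ((q + 1/q) / 2 * Real.exp (-β * (T - 1)))
        + 2 * supNorm f * ((q + 1/q) / 2 * Real.exp (-β * (T - 1)))
        = 2 * (q + 1/q) * supNorm f * Real.exp (-β * (T - 1)) := by ring
    calc |B q β n f x - f x| ≤ _ := this
      _ ≤ 2 * supNorm f * ((q + 1/q) / 2 * Real.exp (-β * (T - 1)))
          + (omega f θ + 2 * supNorm f * ((q + 1/q) / 2 * Real.exp (-β * (T - 1)))) := by
          gcongr
      _ = omega f θ + 2 * (q + 1/q) * supNorm f * Real.exp (-β * (T - 1)) := by ring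
  exact hfinal
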